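/- Deterministic factorizable correlations satisfy the CHSH inequality: suppose there is a probability space (Λ, μ) and functions A : S × Λ → {-1,1}, B : S × Λ → {-1,1}, with correlations E(a,b) = ∫_Λ A(a,λ)·B(b,λ) dμ(λ). Then for any settings a, a', b, b': |E(a,b) + E(a,b') + E(a',b) - E(a',b')| ≤ 2. -/

import Mathlib

open MeasureTheory

/-- deterministic factorizable correlations satisfy the CHSH inequality.
`(Λ, μ)` is a probability space, `A, B : S × Λ → {-1,1}` are measurable response
functions, and `E(a,b) = ∫ A(a,λ)·B(b,λ) dμ(λ)`.  Then for all settings `a, a', b, b'`: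
`|E(a,b) + E(a,b') + E(a',b) - E(a',b')| ≤ 2`. -/
theorem chsh_inequality {Λ S : Type*} [MeasurableSpace Λ]
    (μ : Measure Λ) [IsProbabilityMeasure μ]
    (A B : S → Λ → ℝ)
    (hAm : ∀ s, Measurable (A s)) (hBm : ∀ s, Measurable (B s))
    (hA1 : ∀ s l, A s l = 1 ∨ A s l = -1) (hB1 : ∀ s l, B s l = 1 ∨ B s l = -1)
    (a a' b b' : S) :
    |(∫ l, A a l * B b l ∂μ) + (∫ l, A a l * B b' l ∂μ) +
        (∫ l, A a' l * B b l ∂μ) - (∫ l, A a' l * B b' l ∂μ)| ≤ 2 := by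
  have hint : ∀ s t, Integrable (fun l => A s l * B t l) μ := by
    intro s t
    apply Integrable.mono' (integrable_const (1 : ℝ))
      ((hAm s).mul (hBm t)).aestronglyMeasurable
    filter_upwards with l
    rw [Real.norm_eq_abs, Pi.mul_apply, abs_mul]
    rcases hA1 s l with h | h <;> rcases hB1 t l with h' | h' <;> simp [h, h']
  have e : ∫ l, (A a l * B b l + A a l * B b' l + A a' l * B b l - A a' l * B b' l) ∂μ =
      (∫ l, A a l * B b l ∂μ) + (∫ l, A a l * B b' l ∂μ) +
        (∫ l, A a' l * B b l ∂μ) - (∫ l, A a' l * B b' l ∂μ) := by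
    have e1 := integral_add (hint a b) (hint a b') (μ := μ)
    have e2 := integral_add ((hint a b).add (hint a b')) (hint a' b) (μ := μ)
    have e3 := integral_sub (((hint a b).add (hint a b')).add (hint a' b)) (hint a' b') (μ := μ)
    simp only [Pi.add_apply, Pi.sub_apply] at e1 e2 e3
    rw [e3, e2, e1]
  rw [← e]
  calc |∫ l, A a l * B b l + A a l * B b' l + A a' l * B b l - A a' l * B b' l ∂μ|
      ≤ ∫ l, |A a l * B b l + A a l * B b' l + A a' l * B b l - A a' l * B b' l| ∂μ :=
        by simpa using norm_integral_le_integral_norm (μ := μ) (fun l => A a l * B b l + A a l * B b' l + A a' l * B b l - A a' l * B b' l)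
    _ ≤ ∫ _l, (2 : ℝ) ∂μ := by
        apply integral_mono_of_nonneg (Filter.Eventually.of_forall fun l => abs_nonneg _)
          (integrable_const 2)
        filter_upwards with l
        rcases hA1 a l with h1 | h1 <;> rcases hA1 a' l with h2 | h2 <;>
          rcases hB1 b l with h3 | h3 <;> rcases hB1 b' l with h4 | h4 <;>
          simp [h1, h2, h3, h4] <;> norm_num
    _ = 2 := by simp
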